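/- A(F_m) is asymptotic to c·F_m^λ as m → ∞, where c = (√5)^λ/6; that is, lim_{m→∞} A(F_m)/F_m^λ = (√5)^λ/6. -/

import Mathlib

open scoped BigOperators
open Filter Topology

/-- A natural number is a Fibonacci number, i.e. equals `F m` for some `m ≥ 1`
(with `F 1 = F 2 = 1`). -/
def IsFibNum (x : ℕ) : Prop := ∃ m : ℕ, 0 < m ∧ Nat.fib m = x

/-- `R n` counts the partitions of `n` into distinct Fibonacci numbers:
the number of finite sets of Fibonacci numbers with sum `n` (so `R 0 = 1`). -/
noncomputable def R (n : ℕ) : ℕ :=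
  Nat.card {S : Finset ℕ // (∀ x ∈ S, IsFibNum x) ∧ (∑ x ∈ S, x) = n}

/-- The summatory function `A H = ∑_{n=0}^{H} R n`. -/
noncomputable def A (H : ℕ) : ℕ := ∑ n ∈ Finset.range (H + 1), R n

/-- counting index sets -/
def g (m : ℕ) : ℕ :=
  (((Finset.Icc 2 m).powerset).filter (fun T => ∑ k ∈ T, Nat.fib k ≤ Nat.fib m)).card

lemma g_two : g 2 = 2 := by decide
lemma g_three : g 3 = 3 := by decide

lemma sum_fib_Icc (j : ℕ) (hj : 1 ≤ j) :
    (∑ k ∈ Finset.Icc 2 j, Nat.fib k) + 2 = Nat.fib (j + 2) := by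
  induction j, hj using Nat.le_induction with
  | base => decide
  | succ j hj ih =>
    have h1 : Nat.fib (j + 1 + 2) = Nat.fib (j + 1) + Nat.fib (j + 2) := Nat.fib_add_two
    have h2 : ∑ k ∈ Finset.Icc 2 (j+1), Nat.fib k
        = (∑ k ∈ Finset.Icc 2 j, Nat.fib k) + Nat.fib (j+1) :=
      Finset.sum_Icc_succ_top (by omega) _
    omega

lemma g_rec (n : ℕ) : g (n + 4) = g (n + 2) + 2 ^ (n + 1) + 1 := by
  classical
  set M := n + 4 with hM
  -- the big set
  set s : Finset (Finset ℕ) :=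
    ((Finset.Icc 2 M).powerset).filter (fun T => ∑ k ∈ T, Nat.fib k ≤ Nat.fib M) with hs
  have hsplit1 := Finset.card_filter_add_card_filter_not
    (s := s) (p := fun T => M ∈ T)
  -- part 1 : M ∈ T forces T = {M}
  have hpart1 : s.filter (fun T => M ∈ T) = {{M}} := by
    ext T
    simp only [hs, Finset.mem_filter, Finset.mem_powerset, Finset.mem_singleton]
    constructor
    · rintro ⟨⟨hsub, hsum⟩, hMem⟩
      have hse : Nat.fib M + ∑ k ∈ T.erase M, Nat.fib k = ∑ k ∈ T, Nat.fib k :=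
        Finset.add_sum_erase _ _ hMem
      have h0 : ∑ k ∈ T.erase M, Nat.fib k = 0 := by omega
      have he : T.erase M = ∅ := by
        by_contra h
        obtain ⟨a, ha⟩ := Finset.nonempty_iff_ne_empty.mpr h
        have haT := Finset.mem_of_mem_erase ha
        have h2a : 2 ≤ a := (Finset.mem_Icc.mp (hsub haT)).1
        have hfa : 0 < Nat.fib a := Nat.fib_pos.mpr (by omega)
        have := Finset.sum_eq_zero_iff.mp h0 a ha
        omega
      have := Finset.insert_erase hMem
      rw [he] at this
      simp at this
      exact this.symm
    · rintro rfl
      simp [Finset.mem_Icc]; omega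
  -- part 2 : M ∉ T
  have hsplit2 := Finset.card_filter_add_card_filter_not
    (s := s.filter (fun T => ¬ M ∈ T)) (p := fun T => (n+3) ∈ T)
  -- part 2a : M ∉ T, n+3 ∈ T : in bijection with g (n+2)'s set
  have hpart2a : ((s.filter (fun T => ¬ M ∈ T)).filter (fun T => (n+3) ∈ T)).card
      = g (n + 2) := by
    rw [g]
    refine Finset.card_bij' (fun T _ => T.erase (n+3))
      (fun T' _ => insert (n+3) T') ?_ ?_ ?_ ?_
    · intro T hT
      simp only [Finset.mem_filter, Finset.mem_powerset, hs] at hT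
      obtain ⟨⟨⟨hsub, hsum⟩, hMnot⟩, hmem⟩ := hT
      simp only [Finset.mem_filter, Finset.mem_powerset]
      have hse : Nat.fib (n+3) + ∑ k ∈ T.erase (n+3), Nat.fib k = ∑ k ∈ T, Nat.fib k :=
        Finset.add_sum_erase _ _ hmem
      have hfib : Nat.fib M = Nat.fib (n+2) + Nat.fib (n+3) := Nat.fib_add_two
      constructor
      · intro k hk
        have hk1 := Finset.mem_of_mem_erase hk
        have hk2 := Finset.ne_of_mem_erase hk
        have := Finset.mem_Icc.mp (hsub hk1)
        have : k ≠ M := by rintro rfl; exact hMnot hk1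
        simp only [Finset.mem_Icc]
        omega
      · omega
    · intro T' hT'
      simp only [Finset.mem_filter, Finset.mem_powerset] at hT'
      obtain ⟨hsub, hsum⟩ := hT'
      have hnot3 : (n+3) ∉ T' := by
        intro h; have := Finset.mem_Icc.mp (hsub h); omega
      simp only [Finset.mem_filter, Finset.mem_powerset, hs]
      have hsum2 : ∑ k ∈ insert (n+3) T', Nat.fib k = Nat.fib (n+3) + ∑ k ∈ T', Nat.fib k :=
        Finset.sum_insert hnot3
      have hfib : Nat.fib M = Nat.fib (n+2) + Nat.fib (n+3) := Nat.fib_add_two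
      refine ⟨⟨⟨?_, by omega⟩, ?_⟩, Finset.mem_insert_self _ _⟩
      · intro k hk
        rcases Finset.mem_insert.mp hk with rfl | hk
        · exact Finset.mem_Icc.mpr ⟨by omega, by omega⟩
        · have := Finset.mem_Icc.mp (hsub hk)
          exact Finset.mem_Icc.mpr ⟨by omega, by omega⟩
      · simp only [Finset.mem_insert]
        push_neg
        refine ⟨by omega, ?_⟩
        intro h; have := Finset.mem_Icc.mp (hsub h); omega
    · intro T hT
      simp only [Finset.mem_filter] at hT
      exact Finset.insert_erase hT.2
    · intro T' hT'
      simp only [Finset.mem_filter, Finset.mem_powerset] at hT'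
      have hnot3 : (n+3) ∉ T' := by
        intro h; have := Finset.mem_Icc.mp (hT'.1 h); omega
      exact Finset.erase_insert hnot3
  -- part 2b : M ∉ T, n+3 ∉ T : all subsets of Icc 2 (n+2)
  have hpart2b : ((s.filter (fun T => ¬ M ∈ T)).filter (fun T => ¬ (n+3) ∈ T))
      = (Finset.Icc 2 (n+2)).powerset := by
    ext T
    simp only [Finset.mem_filter, Finset.mem_powerset, hs]
    constructor
    · rintro ⟨⟨⟨hsub, _⟩, hM⟩, h3⟩
      intro k hk
      have := Finset.mem_Icc.mp (hsub hk)
      have hkM : k ≠ M := by rintro rfl; exact hM hk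
      have hk3 : k ≠ n+3 := by rintro rfl; exact h3 hk
      simp only [Finset.mem_Icc]; omega
    · intro hsub
      have hle : ∑ k ∈ T, Nat.fib k ≤ ∑ k ∈ Finset.Icc 2 (n+2), Nat.fib k :=
        Finset.sum_le_sum_of_subset hsub
      have hid := sum_fib_Icc (n+2) (by omega)
      have hMn : (n+2) + 2 = M := by omega
      rw [hMn] at hid
      refine ⟨⟨⟨fun k hk => ?_, by omega⟩, fun h => ?_⟩, fun h => ?_⟩
      · have := Finset.mem_Icc.mp (hsub hk); simp only [Finset.mem_Icc]; omega
      · have := Finset.mem_Icc.mp (hsub h); omega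
      · have := Finset.mem_Icc.mp (hsub h); omega
  have hcard2b : ((s.filter (fun T => ¬ M ∈ T)).filter (fun T => ¬ (n+3) ∈ T)).card
      = 2 ^ (n + 1) := by
    rw [hpart2b, Finset.card_powerset, Nat.card_Icc]
    congr 1
  have : g M = s.card := rfl
  rw [hpart1] at hsplit1
  simp only [Finset.card_singleton] at hsplit1
  omega

lemma six_g_aux : ∀ n : ℕ, 6 * g (n+2) = 2^(n+2) + 3*(n+2) + 2 - (n+2) % 2
    ∧ 6 * g (n+3) = 2^(n+3) + 3*(n+3) + 2 - (n+3) % 2 := by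
  intro n
  induction n with
  | zero => refine ⟨?_, ?_⟩ <;> simp [g_two, g_three]
  | succ n ih =>
    obtain ⟨h1, h2⟩ := ih
    refine ⟨h2, ?_⟩
    have hr : g (n + 4) = g (n + 2) + 2 ^ (n + 1) + 1 := g_rec n
    have hp : 2 ^ (n + 4) = 4 * 2 ^ (n + 2) := by ring
    have hp2 : 2 ^ (n + 2) = 2 * 2 ^ (n + 1) := by ring
    have : n + 1 + 3 = n + 4 := by omega
    rw [this]
    omega

lemma six_g (m : ℕ) (hm : 2 ≤ m) : 6 * g m = 2^m + 3*m + 2 - m % 2 := by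
  obtain ⟨n, rfl⟩ : ∃ n, m = n + 2 := ⟨m - 2, by omega⟩
  exact (six_g_aux n).1

open scoped Classical in
lemma R_eq (n : ℕ) : R n = ((Finset.range (n+1)).powerset.filter
    (fun S => (∀ x ∈ S, IsFibNum x) ∧ ∑ x ∈ S, x = n)).card := by
  have hset : {S : Finset ℕ | (∀ x ∈ S, IsFibNum x) ∧ (∑ x ∈ S, x) = n}
      = ↑((Finset.range (n+1)).powerset.filter
        (fun S => (∀ x ∈ S, IsFibNum x) ∧ ∑ x ∈ S, x = n)) := by
    ext S
    simp only [Set.mem_setOf_eq, Finset.coe_filter, Finset.mem_powerset]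
    constructor
    · rintro ⟨hfib, hsum⟩
      refine ⟨fun x hx => Finset.mem_range.mpr ?_, hfib, hsum⟩
      have hb : x ≤ ∑ y ∈ S, y := by
        simpa using Finset.single_le_sum (f := fun x : ℕ => x) (fun i _ => Nat.zero_le _) hx
      omega
    · rintro ⟨_, hfib, hsum⟩
      exact ⟨hfib, hsum⟩
  rw [R]
  have h1 : Nat.card {S : Finset ℕ // (∀ x ∈ S, IsFibNum x) ∧ (∑ x ∈ S, x) = n}
      = Set.ncard {S : Finset ℕ | (∀ x ∈ S, IsFibNum x) ∧ (∑ x ∈ S, x) = n} :=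
    Nat.card_coe_set_eq _
  rw [h1, hset, Set.ncard_coe_finset]

open scoped Classical in
lemma A_card (H : ℕ) : A H = ((Finset.range (H+1)).powerset.filter
    (fun S => (∀ x ∈ S, IsFibNum x) ∧ ∑ x ∈ S, x ≤ H)).card := by
  rw [A]
  rw [Finset.card_eq_sum_card_fiberwise (f := fun S => ∑ x ∈ S, x)
    (t := Finset.range (H+1)) (fun S hS => by
      simp only [Finset.mem_coe, Finset.mem_filter] at hS
      show ∑ x ∈ S, x ∈ Finset.range (H+1)
      exact Finset.mem_range.mpr (by omega))]
  refine Finset.sum_congr rfl (fun n hn => ?_)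
  have hn' := Finset.mem_range.mp hn
  rw [R_eq]
  congr 1
  ext S
  simp only [Finset.mem_filter, Finset.mem_powerset]
  constructor
  · rintro ⟨hsub, hfib, hsum⟩
    have hsub' : S ⊆ Finset.range (H+1) := fun x hx =>
      Finset.mem_range.mpr (by have := Finset.mem_range.mp (hsub hx); omega)
    exact ⟨⟨hsub', hfib, by omega⟩, hsum⟩
  · rintro ⟨⟨hsub, hfib, hle⟩, hsum⟩
    refine ⟨fun x hx => Finset.mem_range.mpr ?_, hfib, hsum⟩
    have hb : x ≤ ∑ y ∈ S, y := by
      simpa using Finset.single_le_sum (f := fun x : ℕ => x) (fun i _ => Nat.zero_le _) hx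
    omega

lemma fib_injOn : Set.InjOn Nat.fib (Set.Ici 2) := Nat.fib_strictMonoOn.injOn

open scoped Classical in
lemma A_fib_eq_g (m : ℕ) (hm : 2 ≤ m) : A (Nat.fib m) = g m := by
  rw [A_card, g]
  have himage : ∀ S : Finset ℕ, (∀ x ∈ S, IsFibNum x) → (∑ x ∈ S, x ≤ Nat.fib m) →
      ((Finset.Icc 2 m).filter (fun k => Nat.fib k ∈ S)).image Nat.fib = S := by
    intro S hfib hle
    ext x
    simp only [Finset.mem_image, Finset.mem_filter, Finset.mem_Icc]
    constructor
    · rintro ⟨k, ⟨_, hk⟩, rfl⟩; exact hk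
    · intro hx
      obtain ⟨k, hk0, hkfib⟩ := hfib x hx
      have hxle : x ≤ Nat.fib m := by
        have hb : x ≤ ∑ y ∈ S, y := by
          simpa using Finset.single_le_sum (f := fun x : ℕ => x) (fun i _ => Nat.zero_le _) hx
        omega
      -- replace k by an index ≥ 2
      have : ∃ k', 2 ≤ k' ∧ Nat.fib k' = x := by
        rcases Nat.lt_or_ge k 2 with h | h
        · interval_cases k
          exact ⟨2, le_refl 2, hkfib⟩
        · exact ⟨k, h, hkfib⟩
      obtain ⟨k', hk2, hkx⟩ := this
      have hkm : k' ≤ m := by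
        by_contra hgt
        push_neg at hgt
        have : Nat.fib m < Nat.fib k' := (Nat.fib_lt_fib hm).mpr hgt
        omega
      exact ⟨k', ⟨⟨hk2, hkm⟩, hkx ▸ hx⟩, hkx⟩
  refine Finset.card_bij' (fun S _ => (Finset.Icc 2 m).filter (fun k => Nat.fib k ∈ S))
    (fun T _ => T.image Nat.fib) ?_ ?_ ?_ ?_
  · -- hi
    intro S hS
    simp only [Finset.mem_filter, Finset.mem_powerset] at hS ⊢
    obtain ⟨hsub, hfib, hle⟩ := hS
    refine ⟨Finset.filter_subset _ _, ?_⟩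
    have hinj : Set.InjOn Nat.fib ↑((Finset.Icc 2 m).filter (fun k => Nat.fib k ∈ S)) := by
      apply fib_injOn.mono
      intro k hk
      simp only [Finset.coe_filter, Set.mem_setOf_eq, Finset.mem_Icc] at hk
      exact hk.1.1
    have hs2 : ∑ x ∈ ((Finset.Icc 2 m).filter (fun k => Nat.fib k ∈ S)).image Nat.fib, x
        = ∑ k ∈ (Finset.Icc 2 m).filter (fun k => Nat.fib k ∈ S), Nat.fib k :=
      Finset.sum_image (fun x hx y hy h => hinj hx hy h)
    rw [himage S hfib hle] at hs2
    omega
  · -- hj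
    intro T hT
    simp only [Finset.mem_filter, Finset.mem_powerset] at hT ⊢
    obtain ⟨hsub, hle⟩ := hT
    have hinj : Set.InjOn Nat.fib ↑T := by
      apply fib_injOn.mono
      intro k hk
      simp only [Finset.mem_coe] at hk
      exact (Finset.mem_Icc.mp (hsub hk)).1
    have hsum : ∑ x ∈ T.image Nat.fib, x = ∑ k ∈ T, Nat.fib k :=
      Finset.sum_image (fun x hx y hy h => hinj hx hy h)
    refine ⟨?_, ?_, by omega⟩
    · intro x hx
      obtain ⟨k, hk, rfl⟩ := Finset.mem_image.mp hx
      have h2 := Finset.mem_Icc.mp (hsub hk)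
      have : Nat.fib k ≤ Nat.fib m := Nat.fib_mono h2.2
      exact Finset.mem_range.mpr (by omega)
    · intro x hx
      obtain ⟨k, hk, rfl⟩ := Finset.mem_image.mp hx
      have h2 := Finset.mem_Icc.mp (hsub hk)
      exact ⟨k, by omega, rfl⟩
  · -- left_inv
    intro S hS
    simp only [Finset.mem_filter, Finset.mem_powerset] at hS
    exact himage S hS.2.1 hS.2.2
  · -- right_inv
    intro T hT
    simp only [Finset.mem_filter, Finset.mem_powerset] at hT
    obtain ⟨hsub, hle⟩ := hT
    ext k
    simp only [Finset.mem_filter, Finset.mem_Icc, Finset.mem_image]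
    constructor
    · rintro ⟨⟨h2, hkm⟩, j, hj, hjk⟩
      have hj2 : 2 ≤ j := (Finset.mem_Icc.mp (hsub hj)).1
      have : j = k := fib_injOn (Set.mem_Ici.mpr hj2) (Set.mem_Ici.mpr h2) hjk
      exact this ▸ hj
    · intro hk
      have h2 := Finset.mem_Icc.mp (hsub hk)
      exact ⟨h2, k, hk, rfl⟩

lemma six_A (m : ℕ) (hm : 2 ≤ m) : 6 * A (Nat.fib m) = 2^m + 3*m + 2 - m % 2 := by
  rw [A_fib_eq_g m hm]; exact six_g m hm

/-- `A(F_m) ~ c F_m^λ` with `c = (√5)^λ / 6`. -/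
theorem summatory_at_fib_asymptotic_power (φ lam : ℝ)
    (hφ : φ = (1 + Real.sqrt 5) / 2)
    (hlam : lam = Real.log 2 / Real.log φ) :
    Tendsto (fun m : ℕ => (A (Nat.fib m) : ℝ) / (Nat.fib m : ℝ) ^ lam) atTop
      (𝓝 (Real.sqrt 5 ^ lam / 6)) := by
  have hφg : φ = Real.goldenRatio := by rw [hφ]
  subst hφg
  have hgold1 : (1:ℝ) < Real.goldenRatio := Real.one_lt_goldenRatio
  have hgoldpos : (0:ℝ) < Real.goldenRatio := Real.goldenRatio_pos
  have hpow2 : Real.goldenRatio ^ lam = (2:ℝ) := by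
    have : lam = Real.logb Real.goldenRatio 2 := by rw [hlam, Real.logb]
    rw [this]
    exact Real.rpow_logb hgoldpos (ne_of_gt hgold1) two_pos
  -- e m
  set e : ℕ → ℝ := fun m => 3*(m:ℝ) + 2 - ((m % 2 : ℕ) : ℝ) with he
  -- L1 : e m / 2^m → 0
  have hL0 : Tendsto (fun m : ℕ => e m / 2^m) atTop (𝓝 0) := by
    have hb : Tendsto (fun m : ℕ => 3*((m:ℝ) * (1/2)^m) + 3*(1/2:ℝ)^m) atTop (𝓝 0) := by
      have t1 : Tendsto (fun m : ℕ => (m:ℝ) * (1/2)^m) atTop (𝓝 0) := by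
        have hs : Summable (fun m : ℕ => (m:ℝ)^1 * (1/2)^m) :=
          summable_pow_mul_geometric_of_norm_lt_one 1 (by rw [Real.norm_eq_abs, abs_lt]; norm_num)
        simpa using hs.tendsto_atTop_zero
      have t2 : Tendsto (fun m : ℕ => ((1:ℝ)/2)^m) atTop (𝓝 0) :=
        tendsto_pow_atTop_nhds_zero_of_lt_one (by norm_num) (by norm_num)
      simpa using (t1.const_mul 3).add (t2.const_mul 3)
    apply squeeze_zero (fun m => ?_) (fun m => ?_) hb
    · have h2 : (0:ℝ) < 2^m := by positivity
      apply div_nonneg _ (le_of_lt h2)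
      have hc : ((m % 2 : ℕ) : ℝ) ≤ 1 := by
        have : m % 2 ≤ 1 := by omega
        exact_mod_cast this
      simp only [he]
      have := Nat.cast_nonneg (α := ℝ) m
      nlinarith
    · have h2 : (0:ℝ) < 2^m := by positivity
      have hle : e m ≤ 3*(m:ℝ) + 3 := by
        simp only [he]
        have : (0:ℝ) ≤ ((m % 2 : ℕ) : ℝ) := Nat.cast_nonneg _
        linarith
      have h1 : e m / 2^m ≤ (3*(m:ℝ)+3)/2^m := by gcongr
      have h2' : ((2:ℝ)^m)⁻¹ = (1/2:ℝ)^m := by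
        rw [div_pow, one_pow, one_div]
      have heq : (3*(m:ℝ)+3)/2^m = 3*((m:ℝ)*(1/2)^m)+3*(1/2:ℝ)^m := by
        rw [div_eq_mul_inv, h2']
        ring
      linarith
  -- L2 : golden ratio powers over fib
  have hsqrt5 : (0:ℝ) < Real.sqrt 5 := Real.sqrt_pos.mpr (by norm_num)
  have hψ : |Real.goldenConj / Real.goldenRatio| < 1 := by
    rw [abs_div, abs_of_pos hgoldpos, div_lt_one hgoldpos]
    have h1 : |Real.goldenConj| < 1 := abs_lt.mpr ⟨Real.neg_one_lt_goldenConj, by linarith [Real.goldenConj_neg]⟩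
    linarith
  have hq : Tendsto (fun m : ℕ => (Real.goldenConj/Real.goldenRatio)^m) atTop (𝓝 0) :=
    tendsto_pow_atTop_nhds_zero_of_norm_lt_one (by rw [Real.norm_eq_abs]; exact hψ)
  have hden : Tendsto (fun m : ℕ => 1 - (Real.goldenConj/Real.goldenRatio)^m) atTop (𝓝 1) := by
    simpa using tendsto_const_nhds.sub hq
  have hratio : Tendsto (fun m : ℕ => Real.sqrt 5 / (1 - (Real.goldenConj/Real.goldenRatio)^m))
      atTop (𝓝 (Real.sqrt 5)) := by
    have h := (tendsto_const_nhds (x := Real.sqrt 5)).div hden (by norm_num : (1:ℝ) ≠ 0)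
    rwa [div_one] at h
  have key : ∀ m : ℕ, 1 ≤ m → Real.goldenRatio^m / (Nat.fib m : ℝ)
      = Real.sqrt 5 / (1 - (Real.goldenConj/Real.goldenRatio)^m) := by
    intro m hm
    have hfib : (Nat.fib m : ℝ) = (Real.goldenRatio^m - Real.goldenConj^m)/Real.sqrt 5 :=
      Real.coe_fib_eq m
    have hfibpos : (0:ℝ) < (Nat.fib m : ℝ) := by exact_mod_cast Nat.fib_pos.mpr hm
    have hφm : (0:ℝ) < Real.goldenRatio^m := by positivity
    have hdiff : Real.goldenRatio^m - Real.goldenConj^m = Real.sqrt 5 * (Nat.fib m : ℝ) := by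
      rw [hfib]; field_simp
    have h1 : 1 - (Real.goldenConj/Real.goldenRatio)^m = (Real.goldenRatio^m - Real.goldenConj^m)/Real.goldenRatio^m := by
      rw [div_pow]; field_simp
    rw [h1, hdiff]
    rw [div_div_eq_mul_div, mul_comm (Real.sqrt 5) ((Real.goldenRatio:ℝ)^m), mul_div_assoc,
      div_mul_eq_div_div, div_self (ne_of_gt hsqrt5), mul_one_div]
  have hL2fun : Tendsto (fun m : ℕ => Real.goldenRatio^m / (Nat.fib m : ℝ)) atTop
      (𝓝 (Real.sqrt 5)) := by
    apply hratio.congr'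
    filter_upwards [eventually_ge_atTop 1] with m hm
    exact (key m hm).symm
  have hL2 : Tendsto (fun m : ℕ => (Real.goldenRatio^m / (Nat.fib m : ℝ))^lam) atTop
      (𝓝 (Real.sqrt 5 ^ lam)) := hL2fun.rpow_const (Or.inl (ne_of_gt hsqrt5))
  -- assemble
  have hcomb : Tendsto (fun m : ℕ => (1 + e m/2^m) * ((Real.goldenRatio^m/(Nat.fib m : ℝ))^lam) / 6)
      atTop (𝓝 (Real.sqrt 5 ^ lam / 6)) := by
    have := (((tendsto_const_nhds (x := (1:ℝ))).add hL0).mul hL2).div_const (6:ℝ)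
    simpa using this
  apply hcomb.congr'
  filter_upwards [eventually_ge_atTop 2] with m hm
  have hfibpos : (0:ℝ) < (Nat.fib m : ℝ) := by
    exact_mod_cast Nat.fib_pos.mpr (by omega : 0 < m)
  have hφm : (0:ℝ) < Real.goldenRatio^m := by positivity
  have h2m : (0:ℝ) < 2^m := by positivity
  have hFlam : (0:ℝ) < (Nat.fib m : ℝ)^lam := Real.rpow_pos_of_pos hfibpos lam
  have hA6 : (6:ℝ) * (A (Nat.fib m) : ℝ) = 2^m + e m := by
    have h := six_A m hm
    have hmod : m % 2 ≤ 2^m + 3*m + 2 := by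
      have : m % 2 ≤ 1 := by omega
      have h1 : 1 ≤ 2^m := Nat.one_le_two_pow
      omega
    have := congrArg (fun k : ℕ => (k : ℝ)) h
    rw [Nat.cast_mul, Nat.cast_sub hmod] at this
    push_cast at this ⊢
    simp only [he]
    push_cast
    linarith
  have hrpow : (Real.goldenRatio^m/(Nat.fib m : ℝ))^lam = 2^m / (Nat.fib m : ℝ)^lam := by
    rw [Real.div_rpow (le_of_lt hφm) (Nat.cast_nonneg _)]
    congr 1
    rw [← Real.rpow_natCast Real.goldenRatio m, ← Real.rpow_mul (le_of_lt hgoldpos),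
      mul_comm, Real.rpow_mul (le_of_lt hgoldpos), hpow2, Real.rpow_natCast]
  rw [hrpow]
  have hAval : (A (Nat.fib m) : ℝ) = (2^m + e m)/6 := by
    rw [eq_div_iff (by norm_num : (6:ℝ) ≠ 0)]; linarith
  have h1 : 1 + e m/2^m = (2^m + e m)/2^m := by field_simp
  rw [hAval, h1, div_mul_div_comm, div_div, div_div]
  rw [div_eq_div_iff (by positivity) (by positivity)]
  ring
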